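/- Let S be a ring of prime characteristic p and M an S[T;f]-module that is Artinian over S. Write M_red = M/Nil(M) and M* = ⋂_{e≥0} S T^e M. Then (M_red)* ≅ (M*)_red as S[T;f]-modules; explicitly, for α sufficiently large, (S T^α M + Nil(M))/Nil(M) ≅ S T^α M / (Nil(M) ∩ S T^α M) and both chains stabilize to the same module. -/
import Mathlib


theorem stmt_13 {S M : Type*} [CommRing S] [AddCommGroup M] [Module S M] [IsArtinian S M]
    (p : ℕ) (hp : p.Prime) [CharP S p]
    (θ : M →+ M) (hθ : ∀ (s : S) (m : M), θ (s • m) = s ^ p • θ m)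
    -- `Nil` is the submodule of nilpotent elements `Nil(M)`:
    (Nil : Submodule S M) (hNil : ∀ m : M, m ∈ Nil ↔ ∃ j : ℕ, (⇑θ)^[j] m = 0) :
    ∃ α₀ : ℕ, ∀ α : ℕ, α₀ ≤ α →
      -- the chain `S T^α M` has stabilized to `M* = ⋂_e S T^e M`:
      (Submodule.span S (Set.range (⇑θ)^[α]) =
        ⨅ e : ℕ, Submodule.span S (Set.range (⇑θ)^[e])) ∧
      -- the chain of images in `M_red` has also stabilized:
      (Submodule.span S (Set.range (⇑θ)^[α]) ⊔ Nil =
        Submodule.span S (Set.range (⇑θ)^[α₀]) ⊔ Nil) ∧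
      -- `(S T^α M + Nil(M))/Nil(M) ≅ S T^α M / (Nil(M) ∩ S T^α M)`:
      Nonempty
        ((↥(Submodule.span S (Set.range (⇑θ)^[α]) ⊔ Nil) ⧸
            Submodule.comap (Submodule.span S (Set.range (⇑θ)^[α]) ⊔ Nil).subtype Nil) ≃ₗ[S]
          (↥(Submodule.span S (Set.range (⇑θ)^[α])) ⧸
            Submodule.comap (Submodule.span S (Set.range (⇑θ)^[α])).subtype
              (Nil ⊓ Submodule.span S (Set.range (⇑θ)^[α])))) := by
  set N : ℕ → Submodule S M := fun e => Submodule.span S (Set.range (⇑θ)^[e]) with hN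
  have hanti : Antitone N := by
    apply antitone_nat_of_succ_le
    intro e
    apply Submodule.span_le.2
    rintro _ ⟨m, rfl⟩
    rw [Function.iterate_succ]
    exact Submodule.subset_span ⟨θ m, rfl⟩
  obtain ⟨α₀, hstab⟩ := IsArtinian.monotone_stabilizes (R := S) (M := M)
    ⟨fun e => OrderDual.toDual (N e), fun a b h => hanti h⟩
  have hstab' : ∀ α, α₀ ≤ α → N α = N α₀ := fun α hα => (hstab α hα).symm
  refine ⟨α₀, fun α hα => ⟨?_, ?_, ?_⟩⟩
  · show N α = iInf N
    rw [hstab' α hα]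
    refine le_antisymm (le_iInf fun e => ?_) (iInf_le _ α₀)
    rcases le_total e α₀ with h | h
    · exact hanti h
    · exact (hstab' e h).ge
  · show N α ⊔ Nil = N α₀ ⊔ Nil
    rw [hstab' α hα]
  · rw [inf_comm]
    exact ⟨(LinearMap.quotientInfEquivSupQuotient (N α) Nil).symm⟩
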